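/- Let 𝕜 be a commutative ring, G a group, n ≥ 1, and W any A_n-module. The 𝕜-linear map A_n ⊗_{A_{n−1}} W → V ⊗_𝕜 W determined by γ ⊗ w ↦ (γ·e_n) ⊗ (γ·w) for γ ∈ G_n, w ∈ W, is a well-defined isomorphism of A_n-modules (where V ⊗_𝕜 W carries the diagonal G_n-action), with inverse determined by g e_i ⊗ w ↦ g^{(i)} π_i ⊗ π_i^{−1} (g^{−1})^{(i)} · w for 1 ≤ i ≤ n, g ∈ G, w ∈ W. -/

import Mathlib

/-!
Statement 2: for any `A_n`-module `W`, the map `γ ⊗ w ↦ (γ·e_n) ⊗ (γ·w)` gives a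
well-defined isomorphism of `A_n`-modules `A_n ⊗_{A_{n-1}} W ≅ V ⊗ W` (diagonal action),
with the stated inverse.  Here `A_n ⊗_{A_{n-1}} W` is realized as the quotient of the free
`W`-valued module on `G_n` (i.e. `𝕜[G_n] ⊗_𝕜 W`) by the bimodule relations, and `V ⊗ W` as
the `W`-valued module `(G × Fin n) →₀ W` on the basis `{g e_i}` of `V`.
-/

namespace GPC

variable (G : Type*) [Group G]

/-- The action of the symmetric group on `Fin n → G` permuting coordinates:
`(π • g) i = g (π⁻¹ i)`. -/
def wreathAut (n : ℕ) : Equiv.Perm (Fin n) →* MulAut (Fin n → G) where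
  toFun π :=
    { toFun := fun g => g ∘ ⇑π⁻¹
      invFun := fun g => g ∘ ⇑π
      left_inv := fun g => by funext i; simp
      right_inv := fun g => by funext i; simp
      map_mul' := fun g h => rfl }
  map_one' := by ext g i; simp
  map_mul' := fun π σ => by ext g i; simp

/-- The wreath product `G_n = Gⁿ ⋊ S_n`. -/
abbrev Wr (n : ℕ) := (Fin n → G) ⋊[wreathAut G n] Equiv.Perm (Fin n)

variable {G}

/-- `π_i = s_i s_{i+1} ⋯ s_{n-1}` (as a product of adjacent transpositions,
with 0-based indexing); `π_(last) = 1`. -/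
def piPerm {n : ℕ} (i : Fin n) : Equiv.Perm (Fin n) :=
  ((List.range n).map (fun j =>
    if h : i.val ≤ j ∧ j + 1 < n then Equiv.swap ⟨j, by omega⟩ ⟨j + 1, h.2⟩
    else (1 : Equiv.Perm (Fin n)))).prod

variable (G) in
/-- The subgroup of `G_{n+1}` corresponding to `G_n`: those elements whose
permutation fixes the last index and whose `Gⁿ⁺¹`-component is `1` there. -/
def fixLast (n : ℕ) : Subgroup (Wr G (n + 1)) where
  carrier := {x | x.left (Fin.last n) = 1 ∧ x.right (Fin.last n) = Fin.last n}
  one_mem' := by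
    constructor <;> simp
  mul_mem' := by
    rintro x y ⟨hx1, hx2⟩ ⟨hy1, hy2⟩
    constructor
    · have : x.right⁻¹ (Fin.last n) = Fin.last n := by
        rw [Equiv.Perm.inv_eq_iff_eq]; exact hx2.symm
      simp [SemidirectProduct.mul_left, wreathAut, this, hx1, hy1]
      all_goals simp_all [Equiv.Perm.inv_def]
    · simp [SemidirectProduct.mul_right, hx2, hy2]
  inv_mem' := by
    rintro x ⟨hx1, hx2⟩
    have h2 : x.right⁻¹ (Fin.last n) = Fin.last n := by
      rw [Equiv.Perm.inv_eq_iff_eq]; exact hx2.symm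
    constructor
    · simp [SemidirectProduct.inv_left, wreathAut, hx2, hx1]
      all_goals simp_all [Equiv.Perm.inv_def]
    · simp [SemidirectProduct.inv_right, h2]

/-- The coset representative `g^{(i)} π_i ∈ G_{n+1}`. -/
def cosetRep {n : ℕ} (i : Fin (n + 1)) (g : G) : Wr G (n + 1) :=
  SemidirectProduct.inl (Pi.mulSingle i g) * SemidirectProduct.inr (piPerm i)

lemma piPerm_last {n : ℕ} (i : Fin (n + 1)) : piPerm i (Fin.last n) = i := by
  set f : ℕ → Equiv.Perm (Fin (n + 1)) := fun j =>
    if h : i.val ≤ j ∧ j + 1 < n + 1 then Equiv.swap ⟨j, by omega⟩ ⟨j + 1, h.2⟩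
    else 1 with hf
  have key : ∀ k, i.val ≤ k → k ≤ n →
      ∀ hk : k < n + 1, ((List.range k).map f).prod ⟨k, hk⟩ = i := by
    intro k hk
    induction k, hk using Nat.le_induction with
    | base =>
      intro _ _
      have h1 : ((List.range i.val).map f).prod = 1 := by
        apply List.prod_eq_one
        intro x hx
        simp only [List.mem_map, List.mem_range] at hx
        obtain ⟨j, hj, rfl⟩ := hx
        rw [hf]; exact dif_neg (by omega)
      rw [h1]; rfl
    | succ k hk ih =>
      intro hk2 hk3
      rw [List.range_succ, List.map_append, List.prod_append]
      have hfk : f k = Equiv.swap ⟨k, by omega⟩ ⟨k + 1, by omega⟩ := dif_pos ⟨hk, by omega⟩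
      simp only [List.map_cons, List.map_nil, List.prod_cons, List.prod_nil, mul_one, hfk]
      rw [Equiv.Perm.mul_apply]
      have : Equiv.swap (⟨k, by omega⟩ : Fin (n + 1)) ⟨k + 1, by omega⟩ ⟨k + 1, hk3⟩
          = ⟨k, by omega⟩ := Equiv.swap_apply_right _ _
      rw [this]
      exact ih (by omega) (by omega)
  have hfn : f n = 1 := dif_neg (by omega)
  have hpi : piPerm i = ((List.range (n + 1)).map f).prod := rfl
  have hsplit : ((List.range (n + 1)).map f).prod = ((List.range n).map f).prod := by
    rw [List.range_succ, List.map_append, List.prod_append]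
    simp [hfn]
  rw [hpi, hsplit]
  exact key n i.is_le (le_refl n) (by omega)

section Statement2

variable (𝕜 : Type*) [CommRing 𝕜] (G : Type*) [Group G] (n : ℕ)
variable (W : Type*) [AddCommGroup W] [Module 𝕜 W]
variable (ρW : Representation 𝕜 (Wr G (n + 1)) W)

/-- The submodule of relations defining `A_n ⊗_{A_{n-1}} W` inside
`A_n ⊗_𝕜 W ≅ (G_n →₀ W)`: it is spanned by the elements `γ h ⊗ w - γ ⊗ h • w`
for `γ ∈ G_n`, `h ∈ G_{n-1}` and `w ∈ W`. -/
noncomputable def tensorRel : Submodule 𝕜 ((Wr G (n + 1)) →₀ W) :=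
  Submodule.span 𝕜
    {z | ∃ (γ : Wr G (n + 1)) (h : fixLast G n) (w : W),
      z = Finsupp.single (γ * (h : Wr G (n + 1))) w - Finsupp.single γ (ρW h w)}

/-- The action of `γ ∈ G_n` on `A_n ⊗_𝕜 W ≅ (G_n →₀ W)` by left multiplication
on the first factor. -/
noncomputable def actInd (γ : Wr G (n + 1)) : ((Wr G (n + 1)) →₀ W) →ₗ[𝕜] ((Wr G (n + 1)) →₀ W) :=
  Finsupp.lmapDomain W 𝕜 (fun δ => γ * δ)

/-- The image of the basis vector `g e_i` of `V` under the action of `γ ∈ G_n`: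
`(h π) · (g e_i) = h_{π i} g e_{π i}`. -/
def actBasis (γ : Wr G (n + 1)) (p : G × Fin (n + 1)) : G × Fin (n + 1) :=
  (γ.left (γ.right p.2) * p.1, γ.right p.2)

/-- The diagonal action of `γ ∈ G_n` on `V ⊗_𝕜 W ≅ ((G × Fin (n+1)) →₀ W)`:
`γ • (g e_i ⊗ w) = (γ · g e_i) ⊗ (γ • w)`. -/
noncomputable def actDiag (γ : Wr G (n + 1)) :
    ((G × Fin (n + 1)) →₀ W) →ₗ[𝕜] ((G × Fin (n + 1)) →₀ W) :=
  Finsupp.lsum 𝕜 (fun p => (Finsupp.lsingle (actBasis G n γ p)) ∘ₗ (ρW γ : W →ₗ[𝕜] W))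

/-- The "evaluate at `e_n`" point of `γ`. -/
def ptP (γ : Wr G (n + 1)) : G × Fin (n + 1) :=
  (γ.left (γ.right (Fin.last n)), γ.right (Fin.last n))

lemma ptP_mul (γ δ : Wr G (n + 1)) :
    ptP G n (γ * δ) = actBasis G n γ (ptP G n δ) := by
  simp [ptP, actBasis, SemidirectProduct.mul_left, SemidirectProduct.mul_right, wreathAut,
    Equiv.Perm.mul_apply]

lemma cosetRep_left (i : Fin (n + 1)) (g : G) :
    (cosetRep i g).left = Pi.mulSingle i g := by
  simp [cosetRep, SemidirectProduct.mul_left]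

lemma cosetRep_right (i : Fin (n + 1)) (g : G) :
    (cosetRep i g).right = piPerm i := by
  simp [cosetRep, SemidirectProduct.mul_right]

lemma ptP_cosetRep (i : Fin (n + 1)) (g : G) :
    ptP G n (cosetRep i g) = (g, i) := by
  simp [ptP, cosetRep_left, cosetRep_right, piPerm_last]

lemma cosetRep_inv (i : Fin (n + 1)) (g : G) :
    (cosetRep i g)⁻¹
      = (SemidirectProduct.inr (piPerm i))⁻¹
          * SemidirectProduct.inl (Pi.mulSingle i g⁻¹) := by
  rw [cosetRep, mul_inv_rev, ← map_inv, ← map_inv, Pi.mulSingle_inv]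

lemma cosetRep_inv_mul_mem (γ : Wr G (n + 1)) :
    (cosetRep (ptP G n γ).2 (ptP G n γ).1)⁻¹ * γ ∈ fixLast G n := by
  have hπ : piPerm (ptP G n γ).2 (Fin.last n) = (ptP G n γ).2 :=
    piPerm_last _
  have hrightinv : ((cosetRep (ptP G n γ).2 (ptP G n γ).1).right)⁻¹ = (piPerm (ptP G n γ).2)⁻¹ := by
    rw [cosetRep_right]
  constructor
  · show ((cosetRep (ptP G n γ).2 (ptP G n γ).1)⁻¹ * γ).left (Fin.last n) = 1
    rw [SemidirectProduct.mul_left, SemidirectProduct.inv_left, SemidirectProduct.inv_right]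
    simp only [wreathAut, MonoidHom.coe_mk, OneHom.coe_mk, MulEquiv.coe_mk, Equiv.coe_fn_mk,
      Pi.mul_apply, Function.comp_apply, Pi.inv_apply, inv_inv]
    rw [cosetRep_left, cosetRep_right, hπ]
    simp [ptP, hπ, Pi.mulSingle_eq_same]
  · show ((cosetRep (ptP G n γ).2 (ptP G n γ).1)⁻¹ * γ).right (Fin.last n) = Fin.last n
    rw [SemidirectProduct.mul_right, SemidirectProduct.inv_right, cosetRep_right]
    rw [Equiv.Perm.mul_apply]
    show (piPerm (ptP G n γ).2)⁻¹ ((ptP G n γ).2) = Fin.last n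
    rw [Equiv.Perm.inv_eq_iff_eq]; exact hπ.symm

variable {W ρW} in
/-- The forward map on the free module. -/
noncomputable def Fmap : ((Wr G (n + 1)) →₀ W) →ₗ[𝕜] ((G × Fin (n + 1)) →₀ W) :=
  Finsupp.lsum 𝕜 (fun γ => (Finsupp.lsingle (ptP G n γ)) ∘ₗ (ρW γ : W →ₗ[𝕜] W))

lemma Fmap_single (γ : Wr G (n + 1)) (w : W) :
    Fmap 𝕜 G n (ρW := ρW) (Finsupp.single γ w)
      = Finsupp.single (ptP G n γ) (ρW γ w) := by
  simp [Fmap]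

lemma tensorRel_le_ker :
    tensorRel 𝕜 G n W ρW ≤ LinearMap.ker (Fmap 𝕜 G n (ρW := ρW)) := by
  rw [tensorRel, Submodule.span_le]
  rintro z ⟨γ, h, w, rfl⟩
  have hpt : ptP G n (γ * (h : Wr G (n + 1))) = ptP G n γ := by
    rw [ptP_mul]
    obtain ⟨h1, h2⟩ := h.2
    simp [ptP, actBasis, h1, h2]
  simp only [SetLike.mem_coe, LinearMap.mem_ker, map_sub, Fmap_single, hpt, map_mul,
    Module.End.mul_apply]
  exact sub_self _

/-- The descended forward map. -/
noncomputable def Fbar :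
    (((Wr G (n + 1)) →₀ W) ⧸ tensorRel 𝕜 G n W ρW) →ₗ[𝕜] ((G × Fin (n + 1)) →₀ W) :=
  Submodule.liftQ _ (Fmap 𝕜 G n (ρW := ρW)) (tensorRel_le_ker 𝕜 G n W ρW)

/-- The inverse map. -/
noncomputable def Bmap :
    ((G × Fin (n + 1)) →₀ W) →ₗ[𝕜] (((Wr G (n + 1)) →₀ W) ⧸ tensorRel 𝕜 G n W ρW) :=
  Finsupp.lsum 𝕜 (fun p =>
    (tensorRel 𝕜 G n W ρW).mkQ ∘ₗ (Finsupp.lsingle (cosetRep p.2 p.1))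
      ∘ₗ (ρW (cosetRep p.2 p.1)⁻¹ : W →ₗ[𝕜] W))

lemma Bmap_single (g : G) (i : Fin (n + 1)) (w : W) :
    Bmap 𝕜 G n W ρW (Finsupp.single (g, i) w)
      = Submodule.Quotient.mk (Finsupp.single (cosetRep i g) (ρW (cosetRep i g)⁻¹ w)) := by
  simp [Bmap, Submodule.mkQ_apply]

lemma Bmap_Fmap (x : (Wr G (n + 1)) →₀ W) :
    Bmap 𝕜 G n W ρW (Fmap 𝕜 G n (ρW := ρW) x) = Submodule.Quotient.mk x := by
  have : (Bmap 𝕜 G n W ρW) ∘ₗ (Fmap 𝕜 G n (ρW := ρW)) = (tensorRel 𝕜 G n W ρW).mkQ := by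
    apply Finsupp.lhom_ext
    intro γ w
    simp only [LinearMap.comp_apply, Fmap_single, Submodule.mkQ_apply]
    rw [← Prod.mk.eta (p := ptP G n γ), Bmap_single]
    symm
    rw [Submodule.Quotient.eq]
    apply Submodule.subset_span
    refine ⟨cosetRep (ptP G n γ).2 (ptP G n γ).1,
      ⟨(cosetRep (ptP G n γ).2 (ptP G n γ).1)⁻¹ * γ, cosetRep_inv_mul_mem G n γ⟩, w, ?_⟩
    rw [mul_inv_cancel_left, map_mul, Module.End.mul_apply]
  calc Bmap 𝕜 G n W ρW (Fmap 𝕜 G n (ρW := ρW) x)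
      = ((Bmap 𝕜 G n W ρW) ∘ₗ (Fmap 𝕜 G n (ρW := ρW))) x := rfl
    _ = _ := by rw [this]; rfl

lemma Fmap_Bmap :
    (Fbar 𝕜 G n W ρW) ∘ₗ (Bmap 𝕜 G n W ρW) = LinearMap.id := by
  apply Finsupp.lhom_ext
  rintro ⟨g, i⟩ w
  simp only [LinearMap.comp_apply, Bmap_single, LinearMap.id_apply]
  rw [Fbar, Submodule.liftQ_apply, Fmap_single, ptP_cosetRep, ← Module.End.mul_apply, ← map_mul,
    mul_inv_cancel, map_one, Module.End.one_apply]

theorem induced_iso_perm_tensor :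
    ∃ e : (((Wr G (n + 1)) →₀ W) ⧸ tensorRel 𝕜 G n W ρW) ≃ₗ[𝕜] ((G × Fin (n + 1)) →₀ W),
      -- `e` is a homomorphism of `A_n`-modules
      (∀ (γ : Wr G (n + 1)) (y : (Wr G (n + 1)) →₀ W),
        e (Submodule.Quotient.mk (actInd 𝕜 G n W γ y))
          = actDiag 𝕜 G n W ρW γ (e (Submodule.Quotient.mk y)))
      -- `e` is determined by `γ ⊗ w ↦ (γ · e_n) ⊗ (γ • w)`
      ∧ (∀ (γ : Wr G (n + 1)) (w : W),
        e (Submodule.Quotient.mk (Finsupp.single γ w))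
          = Finsupp.single (γ.left (γ.right (Fin.last n)), γ.right (Fin.last n)) (ρW γ w))
      -- its inverse is determined by `g e_i ⊗ w ↦ g^{(i)} π_i ⊗ (π_i⁻¹ (g⁻¹)^{(i)}) • w`
      ∧ (∀ (g : G) (i : Fin (n + 1)) (w : W),
        e.symm (Finsupp.single (g, i) w)
          = Submodule.Quotient.mk (Finsupp.single (cosetRep i g)
              (ρW ((SemidirectProduct.inr (piPerm i))⁻¹
                    * SemidirectProduct.inl (Pi.mulSingle i g⁻¹)) w))) := by
  classical
  have hcomm : ∀ γ : Wr G (n + 1),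
      (Fmap 𝕜 G n (ρW := ρW)) ∘ₗ (actInd 𝕜 G n W γ)
        = (actDiag 𝕜 G n W ρW γ) ∘ₗ (Fmap 𝕜 G n (ρW := ρW)) := by
    intro γ
    apply Finsupp.lhom_ext
    intro δ w
    simp only [LinearMap.comp_apply, actInd, Finsupp.lmapDomain_apply, Finsupp.mapDomain_single,
      Fmap_single, actDiag, Finsupp.lsum_single, LinearMap.coe_comp, Function.comp_apply,
      Finsupp.lsingle_apply, ptP_mul, map_mul, Module.End.mul_apply]
  have hBF : (Bmap 𝕜 G n W ρW) ∘ₗ (Fbar 𝕜 G n W ρW) = LinearMap.id := by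
    apply Submodule.linearMap_qext
    apply Finsupp.lhom_ext
    intro γ w
    simp only [LinearMap.comp_apply, Submodule.mkQ_apply, LinearMap.id_apply]
    rw [Fbar, Submodule.liftQ_apply]
    exact Bmap_Fmap 𝕜 G n W ρW _
  refine ⟨LinearEquiv.ofLinear (Fbar 𝕜 G n W ρW) (Bmap 𝕜 G n W ρW) (Fmap_Bmap 𝕜 G n W ρW) hBF,
    ?_, ?_, ?_⟩
  · intro γ y
    simp only [LinearEquiv.ofLinear_apply, Fbar, Submodule.liftQ_apply]
    calc (Fmap 𝕜 G n (ρW := ρW)) (actInd 𝕜 G n W γ y)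
        = ((Fmap 𝕜 G n (ρW := ρW)) ∘ₗ (actInd 𝕜 G n W γ)) y := rfl
      _ = ((actDiag 𝕜 G n W ρW γ) ∘ₗ (Fmap 𝕜 G n (ρW := ρW))) y := by rw [hcomm]
      _ = _ := rfl
  · intro γ w
    simp only [LinearEquiv.ofLinear_apply, Fbar, Submodule.liftQ_apply, Fmap_single]
    rfl
  · intro g i w
    simp only [LinearEquiv.ofLinear_symm_apply, Bmap_single, cosetRep_inv]

end Statement2

end GPC
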